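/- Let 𝓗 be a finite hypergraph on a finite set V. If 𝓗 is a Tetris hypergraph, then 𝓗 satisfies condition (*): for every S ⊆ V with 𝓗_S ≠ ∅ there exists H ∈ 𝓗_S such that H ∩ H' ≠ ∅ for all H' ∈ 𝓗_S. -/

import Mathlib

/-- The minimum excludant of a set of natural numbers. -/
noncomputable def mex (S : Set ℕ) : ℕ := sInf {n : ℕ | n ∉ S}

open Classical in
/-- The Sprague–Grundy function of the impartial game with move relation `move`
(meaningful when every play is finite, i.e. the reversed move relation is
well-founded): it satisfies `sgFun move x = mex {sgFun move y | move x y}`. -/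
noncomputable def sgFun {X : Type*} (move : X → X → Prop) : X → ℕ :=
  if hwf : WellFounded (fun y x => move x y) then
    hwf.fix (fun x ih => mex {v : ℕ | ∃ (y : X) (h : move x y), ih y h = v})
  else fun _ => 0

open Classical in
/-- The Tetris function: the length of a longest play starting at `x`
(meaningful when every play is finite and the game is finitely branching):
it satisfies `tetrisFun move x = sup {tetrisFun move y + 1 | move x y}`. -/
noncomputable def tetrisFun {X : Type*} (move : X → X → Prop) : X → ℕ :=
  if hwf : WellFounded (fun y x => move x y) then
    hwf.fix (fun x ih => sSup {v : ℕ | ∃ (y : X) (h : move x y), v = ih y h + 1})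
  else fun _ => 0

/-- A game is SG decreasing if every move strictly decreases the SG value. -/
def SGDecreasing {X : Type*} (move : X → X → Prop) : Prop :=
  ∀ x y, move x y → sgFun move y < sgFun move x

/-- The move relation of the game `NIM_𝓗` on positions `ℕ^V`. -/
def nimMove {V : Type*} (𝓗 : Set (Finset V)) (x x' : V → ℕ) : Prop :=
  ∃ H ∈ 𝓗, (∀ i ∈ H, x' i < x i) ∧ ∀ i ∉ H, x' i = x i

/-- A hypergraph is Tetris if `NIM_𝓗` is SG decreasing. -/
def IsTetrisHypergraph {V : Type*} (𝓗 : Set (Finset V)) : Prop :=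
  SGDecreasing (nimMove 𝓗)

/-- The move relation of the `𝓗`-combination of the games `move i`. -/
def combMove {V : Type*} {X : V → Type*} (𝓗 : Set (Finset V))
    (move : ∀ i, X i → X i → Prop) (x x' : ∀ i, X i) : Prop :=
  ∃ H ∈ 𝓗, (∀ i ∈ H, move i (x i) (x' i)) ∧ ∀ i ∉ H, x' i = x i

/-- Condition (*): every nonempty induced subhypergraph has a hyperedge
intersecting all its hyperedges. -/
def CondStar {V : Type*} [DecidableEq V] (𝓗 : Set (Finset V)) : Prop :=
  ∀ S : Finset V, (∃ H ∈ 𝓗, H ⊆ S) →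
    ∃ H ∈ 𝓗, H ⊆ S ∧ ∀ H' ∈ 𝓗, H' ⊆ S → (H ∩ H').Nonempty

lemma sgFun_eq {X : Type*} (move : X → X → Prop)
    (hwf : WellFounded (fun y x => move x y)) (x : X) :
    sgFun move x = mex {v : ℕ | ∃ y, move x y ∧ sgFun move y = v} := by
  rw [sgFun, dif_pos hwf, hwf.fix_eq]
  congr 1
  ext v
  constructor
  · rintro ⟨y, h, rfl⟩; exact ⟨y, h, by simp only [sgFun, dif_pos hwf]⟩
  · rintro ⟨y, h, rfl⟩; exact ⟨y, h, by simp only [sgFun, dif_pos hwf]⟩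

lemma nim_wf {V : Type*} [Fintype V] (𝓗 : Set (Finset V)) (hne : ∀ H ∈ 𝓗, H.Nonempty) :
    WellFounded (fun y x : V → ℕ => nimMove 𝓗 x y) := by
  have : Subrelation (fun y x : V → ℕ => nimMove 𝓗 x y)
      (InvImage (· < ·) (fun x : V → ℕ => ∑ i, x i)) := by
    rintro y x ⟨H, hH, hlt, heq⟩
    obtain ⟨i₀, hi₀⟩ := hne H hH
    refine Finset.sum_lt_sum (fun i _ => ?_) ⟨i₀, Finset.mem_univ i₀, hlt i₀ hi₀⟩
    by_cases hi : i ∈ H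
    · exact (hlt i hi).le
    · exact (heq i hi).le
  exact Subrelation.wf this (InvImage.wf _ Nat.lt_wfRel.wf)

theorem stmt7 {V : Type*} [Fintype V] [DecidableEq V]
    (𝓗 : Set (Finset V)) (hne : ∀ H ∈ 𝓗, H.Nonempty)
    (hT : IsTetrisHypergraph 𝓗) : CondStar 𝓗 := by
  intro S hS
  by_contra hcon
  push_neg at hcon
  have hwf := nim_wf 𝓗 hne
  set x : V → ℕ := fun i => if i ∈ S then 1 else 0 with hx
  -- a generic move: zero out an edge where the position is positive
  have mkmove : ∀ (y : V → ℕ) (H : Finset V), H ∈ 𝓗 → (∀ i ∈ H, 0 < y i) →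
      nimMove 𝓗 y (fun i => if i ∈ H then 0 else y i) := by
    intro y H hH hpos
    exact ⟨H, hH, fun i hi => by simp [hi, hpos i hi], fun i hi => by simp [hi]⟩
  -- every option of x has sgFun positive
  have hopt : ∀ y, nimMove 𝓗 x y → 0 < sgFun (nimMove 𝓗) y := by
    rintro y ⟨H, hH, hlt, heq⟩
    have hHS : H ⊆ S := by
      intro i hi
      by_contra hiS
      have := hlt i hi
      simp [hx, hiS] at this
    obtain ⟨H', hH', hH'S, hdisj⟩ := hcon H hH hHS
    have hpos : ∀ i ∈ H', 0 < y i := by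
      intro i hi
      have hiH : i ∉ H := by
        intro hiH
        exact (Finset.not_nonempty_iff_eq_empty.mpr hdisj) ⟨i, Finset.mem_inter.mpr ⟨hiH, hi⟩⟩
      rw [heq i hiH]
      simp [hx, hH'S hi]
    have := hT y _ (mkmove y H' hH' hpos)
    omega
  -- hence sgFun x = 0
  have hx0 : sgFun (nimMove 𝓗) x = 0 := by
    rw [sgFun_eq _ hwf]
    apply Nat.sInf_eq_zero.mpr
    left
    rintro ⟨y, hy, hy0⟩
    have := hopt y hy
    omega
  -- but x has a move, contradiction
  obtain ⟨H₀, hH₀, hH₀S⟩ := hS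
  have hpos : ∀ i ∈ H₀, 0 < x i := fun i hi => by simp [hx, hH₀S hi]
  have := hT x _ (mkmove x H₀ hH₀ hpos)
  omega
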